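/- Let 𝒜 be a deterministic algorithm that solves the val-agreement problem in the omission model for a validity property val. Let c₀ ∈ I_n, let E₀ be the unique infinite execution of 𝒜 with no faulty processes and input_conf(E₀) = c₀, and let v₀' be the value decided by the processes in E₀. Let c₁* ∈ I be an input configuration with v₀' ∉ val(c₁*), let c₁ ∈ I_n satisfy c₁ ⊒ c₁*, let E₁ be the unique infinite execution of 𝒜 with no faulty processes and input_conf(E₁) = c₁, and let v₁' be the value decided by the processes in E₁ (such decided values exist by Termination and Agreement). Then v₁' ≠ v₀'. -/

import Mathlib

/-- A message: a sender, a (distinct) receiver and a round number. -/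
structure Message (n : ℕ) where
  sender : Fin n
  receiver : Fin n
  round : ℕ
  ne : sender ≠ receiver

/-- A valid set of messages received by a process in state `s`:
every message has the right receiver and round, and there is
at most one message per sender. -/
def ValidRecv {n : ℕ} {St : Type} (proc : St → Fin n) (rnd : St → ℕ)
    (s : St) (M : Set (Message n)) : Prop :=
  (∀ m ∈ M, m.receiver = proc s ∧ m.round = rnd s) ∧
  (∀ m ∈ M, ∀ m' ∈ M, m.sender = m'.sender → m = m')

/-- A deterministic algorithm in the synchronous (omission) model:
a type of local states recording a process, a round, a proposal and a
decision, initial states and initial messages for every proposal, and a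
deterministic transition function. -/
structure Algorithm (n : ℕ) (Vi Vo : Type) where
  St : Type
  proc : St → Fin n
  rnd : St → ℕ
  prop : St → Vi
  dec : St → Option Vo
  init : Fin n → Vi → St
  initMsgs : Fin n → Vi → Set (Message n)
  trans : St → Set (Message n) → St × Set (Message n)
  init_proc : ∀ i v, proc (init i v) = i
  init_rnd : ∀ i v, rnd (init i v) = 1
  init_prop : ∀ i v, prop (init i v) = v
  init_dec : ∀ i v, dec (init i v) = none
  initMsgs_sender : ∀ i v, ∀ m ∈ initMsgs i v, m.sender = i
  initMsgs_round : ∀ i v, ∀ m ∈ initMsgs i v, m.round = 1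
  initMsgs_uniq : ∀ i v, ∀ m ∈ initMsgs i v, ∀ m' ∈ initMsgs i v,
    m.receiver = m'.receiver → m = m'
  trans_ok : ∀ s M, ValidRecv proc rnd s M →
    proc (trans s M).1 = proc s ∧
    rnd (trans s M).1 = rnd s + 1 ∧
    prop (trans s M).1 = prop s ∧
    (dec s ≠ none → dec (trans s M).1 = dec s) ∧
    (∀ m ∈ (trans s M).2, m.sender = proc s ∧ m.round = rnd s + 1) ∧
    (∀ m ∈ (trans s M).2, ∀ m' ∈ (trans s M).2, m.receiver = m'.receiver → m = m')

/-- The data of an execution of algorithm `A`: the set of faulty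
processes and, for every process and round, a state and the four sets of
sent, send-omitted, received and receive-omitted messages. -/
structure Exec {n : ℕ} {Vi Vo : Type} (A : Algorithm n Vi Vo) where
  faulty : Set (Fin n)
  st : Fin n → ℕ → A.St
  sent : Fin n → ℕ → Set (Message n)
  sendOmit : Fin n → ℕ → Set (Message n)
  recvd : Fin n → ℕ → Set (Message n)
  recvOmit : Fin n → ℕ → Set (Message n)

/-- `j` is one of the rounds `1, …, k` (where `k ∈ ℕ ∪ {∞}`). -/
def InHorizon (k : ℕ∞) (j : ℕ) : Prop := 1 ≤ j ∧ (j : ℕ∞) ≤ k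

/-- `E` is a `k`-round execution of `A` with at most `t` faulty processes. -/
def IsExec {n : ℕ} {Vi Vo : Type} (t : ℕ) (A : Algorithm n Vi Vo) (k : ℕ∞)
    (E : Exec A) : Prop :=
  -- at most `t` faulty processes
  E.faulty.encard ≤ (t : ℕ∞) ∧
  -- every process starts in one of its initial states, with
  -- sent ∪ send-omitted equal to its prescribed initial send set
  ((1 : ℕ∞) ≤ k → ∀ i, ∃ v, E.st i 1 = A.init i v ∧
      E.sent i 1 ∪ E.sendOmit i 1 = A.initMsgs i v) ∧
  -- later states and sent ∪ send-omitted sets are obtained by the transition function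
  (∀ i j, 1 ≤ j → ((j + 1 : ℕ) : ℕ∞) ≤ k →
      A.trans (E.st i j) (E.recvd i j)
        = (E.st i (j + 1), E.sent i (j + 1) ∪ E.sendOmit i (j + 1))) ∧
  -- per-round well-formedness (fragments)
  (∀ i j, InHorizon k j →
      A.proc (E.st i j) = i ∧ A.rnd (E.st i j) = j ∧
      (∀ m ∈ E.sent i j ∪ E.sendOmit i j, m.sender = i ∧ m.round = j) ∧
      (∀ m ∈ E.recvd i j ∪ E.recvOmit i j, m.receiver = i ∧ m.round = j) ∧
      E.sent i j ∩ E.sendOmit i j = ∅ ∧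
      E.recvd i j ∩ E.recvOmit i j = ∅ ∧
      (∀ m ∈ E.sent i j ∪ E.sendOmit i j, ∀ m' ∈ E.sent i j ∪ E.sendOmit i j,
        m.receiver = m'.receiver → m = m') ∧
      (∀ m ∈ E.recvd i j ∪ E.recvOmit i j, ∀ m' ∈ E.recvd i j ∪ E.recvOmit i j,
        m.sender = m'.sender → m = m')) ∧
  -- send-validity
  (∀ i j, InHorizon k j → ∀ m ∈ E.sent i j,
      m ∈ E.recvd m.receiver j ∪ E.recvOmit m.receiver j) ∧
  -- receive-validity
  (∀ i j, InHorizon k j → ∀ m ∈ E.recvd i j ∪ E.recvOmit i j, m ∈ E.sent m.sender j) ∧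
  -- omission-validity
  (∀ i, (∃ j, InHorizon k j ∧ (E.sendOmit i j ≠ ∅ ∨ E.recvOmit i j ≠ ∅)) → i ∈ E.faulty)

/-- Process `i` proposes `v` in `E`. -/
def Proposes {n : ℕ} {Vi Vo : Type} {A : Algorithm n Vi Vo}
    (E : Exec A) (i : Fin n) (v : Vi) : Prop :=
  A.prop (E.st i 1) = v

/-- Process `i` decides `v` in the `k`-round execution `E`. -/
def Decides {n : ℕ} {Vi Vo : Type} {A : Algorithm n Vi Vo}
    (k : ℕ∞) (E : Exec A) (i : Fin n) (v : Vo) : Prop :=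
  ∃ j, InHorizon k j ∧ A.dec (E.st i j) = some v

/-- The number of messages sent (not send-omitted) by correct processes in `E`. -/
noncomputable def msgCount {n : ℕ} {Vi Vo : Type} {A : Algorithm n Vi Vo}
    (E : Exec A) : ℕ∞ :=
  {m : Message n | ∃ i, i ∉ E.faulty ∧ ∃ j, 1 ≤ j ∧ m ∈ E.sent i j}.encard

/-- The message complexity of `A`: the supremum, over all infinite
executions of `A` (with at most `t` faulty processes), of the number of
messages sent by correct processes. -/
noncomputable def MsgComplexity {n : ℕ} {Vi Vo : Type} (t : ℕ)
    (A : Algorithm n Vi Vo) : ℕ∞ :=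
  ⨆ E : {E : Exec A // IsExec t A ⊤ E}, msgCount E.1

/-- Two `k`-round executions are indistinguishable to process `i`: it has the
same proposal and receives exactly the same messages in every round of both. -/
def Indist {n : ℕ} {Vi Vo : Type} {A : Algorithm n Vi Vo}
    (k : ℕ∞) (E E' : Exec A) (i : Fin n) : Prop :=
  A.prop (E.st i 1) = A.prop (E'.st i 1) ∧
  ∀ j, InHorizon k j → E.recvd i j = E'.recvd i j

/-- Group `G ⊊ Π` of at most `t` processes is isolated from round `k` in the
infinite execution `E`: every process of `G` is faulty, send-omits no message,
and receive-omits exactly those messages sent to it in rounds `≥ k` by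
processes outside `G`. -/
def IsolatedFrom {n : ℕ} {Vi Vo : Type} {A : Algorithm n Vi Vo}
    (t : ℕ) (E : Exec A) (G : Set (Fin n)) (k : ℕ) : Prop :=
  G ≠ Set.univ ∧ G.encard ≤ (t : ℕ∞) ∧
  ∀ g ∈ G, g ∈ E.faulty ∧
    (∀ j, 1 ≤ j → E.sendOmit g j = ∅) ∧
    (∀ j, 1 ≤ j → E.recvOmit g j
      = {m | m.receiver = g ∧ m.sender ∉ G ∧ k ≤ j ∧ m ∈ E.sent m.sender j})

/-- An input configuration: an assignment of proposals to at least `n - t`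
processes (`none` marks processes outside the domain `π(c)`). -/
def IsInputConf (n t : ℕ) {Vi : Type} (c : Fin n → Option Vi) : Prop :=
  n - t ≤ {i | c i ≠ none}.ncard

/-- The containment relation `c ⊒ c'` between input configurations. -/
def Contains {n : ℕ} {Vi : Type} (c c' : Fin n → Option Vi) : Prop :=
  ∀ i, c' i ≠ none → c i = c' i

/-- The execution `E` corresponds to the input configuration `c`: the correct
processes of `E` are exactly those in `π(c)`, and each of them proposes its
value prescribed by `c`. -/
def CorrespondsTo {n : ℕ} {Vi Vo : Type} {A : Algorithm n Vi Vo}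
    (E : Exec A) (c : Fin n → Option Vi) : Prop :=
  ∀ i, (i ∉ E.faulty → c i = some (A.prop (E.st i 1))) ∧ (i ∈ E.faulty → c i = none)

/-- `A` solves the `val`-agreement problem in the omission model, tolerating
`t` omission-faulty processes: every infinite execution satisfies Termination,
Agreement, and decided values are admissible for the corresponding input
configuration. -/
def SolvesVal {n : ℕ} {Vi Vo : Type} (t : ℕ) (A : Algorithm n Vi Vo)
    (val : (Fin n → Option Vi) → Set Vo) : Prop :=
  ∀ E : Exec A, IsExec t A ⊤ E →
    -- Termination
    (∀ i, i ∉ E.faulty → ∃ v, Decides ⊤ E i v) ∧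
    -- Agreement
    (∀ i i' v v', i ∉ E.faulty → i' ∉ E.faulty →
      Decides ⊤ E i v → Decides ⊤ E i' v' → v = v') ∧
    -- Validity
    (∀ c, CorrespondsTo E c → ∀ i, i ∉ E.faulty → ∀ v, Decides ⊤ E i v → v ∈ val c)

/-- Let `A` solve the `val`-agreement problem, `E₀` a fully
correct infinite execution corresponding to `c₀ ∈ I_n` deciding `v₀`, `c₁*` an
input configuration with `v₀ ∉ val c₁*`, `c₁ ∈ I_n` with `c₁ ⊒ c₁*`, and `E₁`
the fully correct infinite execution corresponding to `c₁`, deciding `v₁`.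
Then `v₁ ≠ v₀`. -/
theorem reduction_decisions_differ
    (n t : ℕ) (htn : t < n)
    (Vi Vo : Type) [Nonempty Vi]
    (val : (Fin n → Option Vi) → Set Vo)
    (hval : ∀ c : Fin n → Option Vi, IsInputConf n t c → (val c).Nonempty)
    (A : Algorithm n Vi Vo) (hA : SolvesVal t A val)
    (c₀ : Fin n → Option Vi) (hc₀full : ∀ i, c₀ i ≠ none)
    (E₀ : Exec A) (hE₀ : IsExec t A ⊤ E₀) (hf₀ : E₀.faulty = ∅)
    (hcor₀ : CorrespondsTo E₀ c₀)
    (v₀ : Vo) (hd₀ : ∃ i, Decides ⊤ E₀ i v₀)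
    (c₁s : Fin n → Option Vi) (hc₁s : IsInputConf n t c₁s) (hv₀ : v₀ ∉ val c₁s)
    (c₁ : Fin n → Option Vi) (hc₁full : ∀ i, c₁ i ≠ none) (hcont : Contains c₁ c₁s)
    (E₁ : Exec A) (hE₁ : IsExec t A ⊤ E₁) (hf₁ : E₁.faulty = ∅)
    (hcor₁ : CorrespondsTo E₁ c₁)
    (v₁ : Vo) (hd₁ : ∃ i, Decides ⊤ E₁ i v₁) :
    v₁ ≠ v₀ := by
  intro hv10
  -- The faulty set of the modified execution
  set F : Set (Fin n) := {i | c₁s i = none} with hF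
  -- F is finite with cardinality ≤ t
  have hScard : n - t ≤ {i | c₁s i ≠ none}.ncard := hc₁s
  have hcompl : {i | c₁s i ≠ none}.ncard + F.ncard = n := by
    have := Set.ncard_add_ncard_compl {i : Fin n | c₁s i ≠ none}
    have hceq : ({i : Fin n | c₁s i ≠ none})ᶜ = F := by
      ext i; simp [hF]
    rw [hceq] at this
    simpa using this
  have hFcard : F.ncard ≤ t := by omega
  have hFfin : F.Finite := Set.toFinite F
  have hFenc : F.encard ≤ (t : ℕ∞) := by
    rw [Set.Finite.encard_eq_coe_toFinset_card hFfin]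
    have : hFfin.toFinset.card = F.ncard := (Set.ncard_eq_toFinset_card F hFfin).symm
    rw [this]
    exact_mod_cast hFcard
  -- the modified execution
  set E' : Exec A := { E₁ with faulty := F } with hE'
  -- E₁ has no omissions to attribute, so E' is a valid execution
  obtain ⟨hcard₁, hinit₁, htrans₁, hwf₁, hsv₁, hrv₁, hom₁⟩ := hE₁
  have hE'exec : IsExec t A ⊤ E' := by
    refine ⟨hFenc, hinit₁, htrans₁, hwf₁, hsv₁, hrv₁, ?_⟩
    intro i hi
    exfalso
    have := hom₁ i hi
    rw [hf₁] at this
    exact this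
  -- E' corresponds to c₁s
  have hcorr' : CorrespondsTo E' c₁s := by
    intro i
    constructor
    · intro hiF
      have hne : c₁s i ≠ none := by simpa [hE', hF] using hiF
      have h1 : c₁ i = c₁s i := hcont i hne
      have h2 : c₁ i = some (A.prop (E₁.st i 1)) := by
        have := (hcor₁ i).1
        rw [hf₁] at this
        exact this (by simp)
      have : c₁s i = some (A.prop (E₁.st i 1)) := by rw [← h1, h2]
      simpa [hE'] using this
    · intro hiF
      simpa [hE', hF] using hiF
  -- there is a correct process in E'
  have hSne : {i : Fin n | c₁s i ≠ none}.Nonempty := by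
    apply Set.nonempty_of_ncard_ne_zero
    omega
  obtain ⟨i, hi⟩ := hSne
  have hiF : i ∉ E'.faulty := by simpa [hE', hF] using hi
  obtain ⟨hterm', hagr', hvalid'⟩ := hA E' hE'exec
  obtain ⟨v, hv⟩ := hterm' i hiF
  -- in E₁ (which has the same states), i decides v, hence v = v₁ by agreement
  have hvE₁ : Decides ⊤ E₁ i v := hv
  obtain ⟨i₁, hi₁⟩ := hd₁
  obtain ⟨hterm₁, hagr₁, hvalid₁⟩ := hA E₁ ⟨hcard₁, hinit₁, htrans₁, hwf₁, hsv₁, hrv₁, hom₁⟩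
  have hvv₁ : v = v₁ := hagr₁ i i₁ v v₁ (by rw [hf₁]; simp) (by rw [hf₁]; simp) hvE₁ hi₁
  have : v ∈ val c₁s := hvalid' c₁s hcorr' i hiF v hv
  rw [hvv₁, hv10] at this
  exact hv₀ this
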